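/- Let k ≥ 3 be an integer. The generalized Cantor function g_k is monotone increasing on [0,1]: for all x, y ∈ [0,1] with x ≤ y, g_k(x) ≤ g_k(y). -/

import Mathlib

open scoped ENNReal

/-- The `k`-transformation `x ↦ k·x mod 1`. -/
noncomputable def Tmap (k : ℕ) (x : ℝ) : ℝ := Int.fract ((k : ℝ) * x)

/-- The survivor set of the `k`-transformation with hole `(a,b)`. -/
def W (k : ℕ) (a b : ℝ) : Set ℝ :=
  {x | x ∈ Set.Ico (0 : ℝ) 1 ∧ ∀ n : ℕ, (Tmap k)^[n] x ∉ Set.Ioo a b}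

/-- The generalized Cantor set `C_k`. -/
def Ck (k : ℕ) : Set ℝ :=
  {x | ∃ a : ℕ → ℕ, (∀ n, a n = 0 ∨ a n = k - 1) ∧
    x = ∑' n : ℕ, (a n : ℝ) / (k : ℝ) ^ (n + 1)}

/-- The `n`-th `k`-ary digit of `x`. -/
noncomputable def digit (k : ℕ) (n : ℕ) (x : ℝ) : ℤ :=
  ⌊(k : ℝ) ^ (n + 1) * x⌋ % (k : ℤ)

open Classical in
/-- The generalized Cantor function `g_k`. -/
noncomputable def gk (k : ℕ) (x : ℝ) : ℝ :=
  if x = 1 then 1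
  else if ∀ n, digit k n x = 0 ∨ digit k n x = (k : ℤ) - 1 then
    ∑' n : ℕ, (digit k n x : ℝ) / (((k : ℝ) - 1) * 2 ^ (n + 1))
  else
    (∑ n ∈ Finset.range (sInf {n : ℕ | ¬(digit k n x = 0 ∨ digit k n x = (k : ℤ) - 1)}),
      (digit k n x : ℝ) / (((k : ℝ) - 1) * 2 ^ (n + 1))) +
    1 / 2 ^ (sInf {n : ℕ | ¬(digit k n x = 0 ∨ digit k n x = (k : ℤ) - 1)} + 1)

/-- The Thue–Morse sequence: parity of the number of 1s in the binary expansion. -/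
def tm (n : ℕ) : ℕ := (Nat.digits 2 n).sum % 2


section
variable {k : ℕ}

lemma digit_nonneg (hk : 3 ≤ k) (n : ℕ) (x : ℝ) : 0 ≤ digit k n x :=
  Int.emod_nonneg _ (by exact_mod_cast (by omega : k ≠ 0))

lemma digit_lt (hk : 3 ≤ k) (n : ℕ) (x : ℝ) : digit k n x < (k:ℤ) :=
  Int.emod_lt_of_pos _ (by exact_mod_cast (by omega : 0 < k))

lemma floor_rec (hk : 3 ≤ k) (n : ℕ) (x : ℝ) :
    ⌊(k:ℝ)^(n+1+1) * x⌋ = k * ⌊(k:ℝ)^(n+1) * x⌋ + digit k (n+1) x := by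
  have hk0 : (0:ℝ) < (k:ℝ) := by exact_mod_cast (by omega : 0 < k)
  set F := ⌊(k:ℝ)^(n+1+1) * x⌋ with hF
  have h1 : (F:ℝ) ≤ (k:ℝ)^(n+1+1) * x := Int.floor_le _
  have h2 : (k:ℝ)^(n+1+1) * x < F + 1 := Int.lt_floor_add_one _
  have hq : (0:ℤ) ≤ F % k := Int.emod_nonneg _ (by exact_mod_cast (by omega : k ≠ 0))
  have hq2 : F % k < (k:ℤ) := Int.emod_lt_of_pos _ (by exact_mod_cast (by omega : 0 < k))
  have hFd : F = k * (F / k) + F % k := (Int.mul_ediv_add_emod F k).symm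
  have hpow : (k:ℝ)^(n+1+1) * x = (k:ℝ) * ((k:ℝ)^(n+1) * x) := by ring
  have key : ⌊(k:ℝ)^(n+1) * x⌋ = F / (k:ℤ) := by
    rw [Int.floor_eq_iff]
    constructor
    · have hr : (0:ℝ) ≤ ((F % (k:ℤ) : ℤ) : ℝ) := by exact_mod_cast hq
      have hFr : ((k:ℤ) * (F / k) + F % k : ℤ) = F := hFd.symm
      have hFr' : (k:ℝ) * ((F / (k:ℤ) : ℤ) : ℝ) + ((F % (k:ℤ) : ℤ) : ℝ) = (F:ℝ) := by
        exact_mod_cast congrArg (fun z : ℤ => (z : ℝ)) hFr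
      have : (k:ℝ) * ((F / (k:ℤ) : ℤ) : ℝ) ≤ (k:ℝ) * ((k:ℝ)^(n+1) * x) := by
        rw [← hpow]; linarith
      exact le_of_mul_le_mul_left this hk0
    · have hr : ((F % (k:ℤ) : ℤ) : ℝ) + 1 ≤ (k:ℝ) := by
        have : F % (k:ℤ) + 1 ≤ (k:ℤ) := hq2
        exact_mod_cast this
      have hFr : ((k:ℤ) * (F / k) + F % k : ℤ) = F := hFd.symm
      have hFr' : (k:ℝ) * ((F / (k:ℤ) : ℤ) : ℝ) + ((F % (k:ℤ) : ℤ) : ℝ) = (F:ℝ) := by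
        exact_mod_cast congrArg (fun z : ℤ => (z : ℝ)) hFr
      have : (k:ℝ) * ((k:ℝ)^(n+1) * x) < (k:ℝ) * (((F / (k:ℤ) : ℤ) : ℝ) + 1) := by
        rw [← hpow]; nlinarith
      exact lt_of_mul_lt_mul_left this (le_of_lt hk0)
  have hd : digit k (n+1) x = F % k := rfl
  rw [key, hd]; exact hFd
end

section
variable {k : ℕ}

lemma floor_base (hk : 3 ≤ k) {x : ℝ} (hx0 : 0 ≤ x) (hx1 : x < 1) :
    ⌊(k:ℝ)^(0+1) * x⌋ = digit k 0 x := by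
  have hk0 : (0:ℝ) < (k:ℝ) := by exact_mod_cast (by omega : 0 < k)
  have h1 : (0:ℝ) ≤ (k:ℝ)^(0+1) * x := by positivity
  have h2 : (k:ℝ)^(0+1) * x < (k:ℝ) := by
    simpa using (mul_lt_mul_of_pos_left hx1 hk0)
  have hf0 : (0:ℤ) ≤ ⌊(k:ℝ)^(0+1) * x⌋ := Int.floor_nonneg.mpr h1
  have hfk : ⌊(k:ℝ)^(0+1) * x⌋ < (k:ℤ) := by
    rw [Int.floor_lt]; exact_mod_cast h2
  exact (Int.emod_eq_of_lt hf0 hfk).symm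

lemma floor_eq_of_digits_eq (hk : 3 ≤ k) {x y : ℝ} (hx0 : 0 ≤ x) (hx1 : x < 1)
    (hy0 : 0 ≤ y) (hy1 : y < 1) (N : ℕ)
    (h : ∀ m ≤ N, digit k m x = digit k m y) :
    ⌊(k:ℝ)^(N+1) * x⌋ = ⌊(k:ℝ)^(N+1) * y⌋ := by
  induction N with
  | zero =>
    rw [floor_base hk hx0 hx1, floor_base hk hy0 hy1]
    exact h 0 le_rfl
  | succ n ih =>
    rw [floor_rec hk, floor_rec hk, ih (fun m hm => h m (by omega)),
      h (n+1) le_rfl]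

lemma eq_of_digits_eq (hk : 3 ≤ k) {x y : ℝ} (hx0 : 0 ≤ x) (hx1 : x < 1)
    (hy0 : 0 ≤ y) (hy1 : y < 1)
    (h : ∀ m, digit k m x = digit k m y) : x = y := by
  have hk1 : (1:ℝ) < (k:ℝ) := by exact_mod_cast (by omega : 1 < k)
  by_contra hne
  have habs : 0 < |x - y| := abs_pos.mpr (sub_ne_zero.mpr hne)
  obtain ⟨n, hn⟩ := pow_unbounded_of_one_lt |x - y|⁻¹ hk1
  have key : ∀ N : ℕ, |x - y| * (k:ℝ)^(N+1) < 1 := by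
    intro N
    have hF := floor_eq_of_digits_eq hk hx0 hx1 hy0 hy1 N (fun m _ => h m)
    have h1 : ((⌊(k:ℝ)^(N+1) * x⌋ : ℤ) : ℝ) ≤ (k:ℝ)^(N+1) * x := Int.floor_le _
    have h2 : (k:ℝ)^(N+1) * x < ⌊(k:ℝ)^(N+1) * x⌋ + 1 := Int.lt_floor_add_one _
    have h3 : ((⌊(k:ℝ)^(N+1) * y⌋ : ℤ) : ℝ) ≤ (k:ℝ)^(N+1) * y := Int.floor_le _
    have h4 : (k:ℝ)^(N+1) * y < ⌊(k:ℝ)^(N+1) * y⌋ + 1 := Int.lt_floor_add_one _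
    rw [hF] at h1 h2
    have : |( (k:ℝ)^(N+1) * x) - ((k:ℝ)^(N+1) * y)| < 1 := abs_sub_lt_iff.mpr ⟨by linarith, by linarith⟩
    calc |x - y| * (k:ℝ)^(N+1) = |(x - y) * (k:ℝ)^(N+1)| := by
          rw [abs_mul, abs_of_pos (show (0:ℝ) < (k:ℝ)^(N+1) by positivity)]
      _ = |((k:ℝ)^(N+1) * x) - ((k:ℝ)^(N+1) * y)| := by ring_nf
      _ < 1 := this
  have := key n
  have hklt : |x - y|⁻¹ < (k:ℝ)^(n+1) := lt_of_lt_of_le hn (by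
    apply pow_le_pow_right₀ (le_of_lt (lt_trans one_lt_two (by norm_num; exact_mod_cast (by omega : 2 < k)))) (by omega))
  have h1 : 1 < |x - y| * (k:ℝ)^(n+1) := by
    rw [inv_lt_iff_one_lt_mul₀ habs] at hklt
    linarith [hklt]
  linarith
end
noncomputable def cterm (k : ℕ) (n : ℕ) (x : ℝ) : ℝ :=
  (digit k n x : ℝ) / (((k : ℝ) - 1) * 2 ^ (n + 1))

section
variable {k : ℕ}

lemma digit_nonneg' (hk : 3 ≤ k) (n : ℕ) (x : ℝ) : 0 ≤ digit k n x :=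
  Int.emod_nonneg _ (by exact_mod_cast (by omega : k ≠ 0))

lemma digit_lt' (hk : 3 ≤ k) (n : ℕ) (x : ℝ) : digit k n x < (k:ℤ) :=
  Int.emod_lt_of_pos _ (by exact_mod_cast (by omega : 0 < k))

lemma km1_pos (hk : 3 ≤ k) : (0:ℝ) < (k:ℝ) - 1 := by
  have : (3:ℝ) ≤ (k:ℝ) := by exact_mod_cast hk
  linarith

lemma cterm_nonneg (hk : 3 ≤ k) (n : ℕ) (x : ℝ) : 0 ≤ cterm k n x := by
  have hkk := km1_pos hk
  apply div_nonneg
  · exact_mod_cast digit_nonneg' hk n x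
  · positivity

lemma cterm_le (hk : 3 ≤ k) (n : ℕ) (x : ℝ) : cterm k n x ≤ (1/2:ℝ)^(n+1) := by
  have hd : (digit k n x : ℝ) ≤ (k:ℝ) - 1 := by
    have : digit k n x ≤ (k:ℤ) - 1 := by have := digit_lt' hk n x; omega
    calc (digit k n x : ℝ) ≤ (((k:ℤ) - 1 : ℤ) : ℝ) := by exact_mod_cast this
      _ = (k:ℝ) - 1 := by push_cast; ring
  have hden : (0:ℝ) < ((k:ℝ) - 1) * 2^(n+1) := by
    have := km1_pos hk; positivity
  have hkk := km1_pos hk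
  calc cterm k n x ≤ ((k:ℝ) - 1) / (((k:ℝ) - 1) * 2^(n+1)) := by
        unfold cterm; gcongr
    _ = (1/2:ℝ)^(n+1) := by
        rw [div_pow, one_pow]; field_simp

lemma summable_half : Summable (fun n : ℕ => (1/2:ℝ)^(n+1)) := by
  simp_rw [pow_succ]
  exact (summable_geometric_of_lt_one (by norm_num) (by norm_num)).mul_right _

lemma summable_cterm (hk : 3 ≤ k) (x : ℝ) : Summable (fun n => cterm k n x) :=
  Summable.of_nonneg_of_le (cterm_nonneg hk · x) (cterm_le hk · x) summable_half

lemma geom_Ico {N M : ℕ} (h : N ≤ M) :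
    ∑ n ∈ Finset.Ico N M, (1/2:ℝ)^(n+1) = (1/2:ℝ)^N - (1/2:ℝ)^M := by
  induction M with
  | zero => interval_cases N; simp
  | succ M ih =>
    rcases Nat.lt_or_ge N (M+1) with h'|h'
    · rw [Finset.sum_Ico_succ_top (Nat.lt_succ_iff.mp h'), ih (Nat.lt_succ_iff.mp h')]
      ring
    · have : N = M+1 := le_antisymm h h'
      subst this; simp

lemma geom_tail (N : ℕ) : ∑' n : ℕ, (1/2:ℝ)^(n+N+1) = (1/2:ℝ)^N := by
  have h : ∀ n:ℕ, (1/2:ℝ)^(n+N+1) = (1/2:ℝ)^(N+1) * (1/2:ℝ)^n := by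
    intro n; rw [← pow_add]; ring_nf
  simp_rw [h]
  rw [tsum_mul_left, tsum_geometric_of_lt_one (by norm_num : (0:ℝ) ≤ 1/2) (by norm_num : (1/2:ℝ) < 1)]
  rw [pow_succ]; ring
end

section
variable {k : ℕ}

lemma one_div_pow_eq (N : ℕ) : (1:ℝ)/2^N = (1/2:ℝ)^N := by
  rw [div_pow, one_pow]

lemma gk_le (hk : 3 ≤ k) {x : ℝ} (hx1 : x ≠ 1) (N : ℕ)
    (hgood : ∀ n < N, digit k n x = 0 ∨ digit k n x = (k:ℤ) - 1) :
    gk k x ≤ (∑ n ∈ Finset.range N, cterm k n x) + (1/2:ℝ)^N := by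
  have hct : ∀ n, (digit k n x : ℝ) / (((k : ℝ) - 1) * 2 ^ (n + 1)) = cterm k n x :=
    fun n => rfl
  rw [gk, if_neg hx1]
  by_cases hall : ∀ n, digit k n x = 0 ∨ digit k n x = (k:ℤ) - 1
  · rw [if_pos hall]
    simp only [hct]
    have hs := summable_cterm hk x
    have hsplit := Summable.sum_add_tsum_nat_add (f := fun n => cterm k n x) N hs
    rw [← hsplit]
    have htail : (∑' n : ℕ, cterm k (n+N) x) ≤ (1/2:ℝ)^N := by
      rw [← geom_tail N]
      have hs1 : Summable (fun n : ℕ => cterm k (n+N) x) :=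
        (summable_nat_add_iff (f := fun n => cterm k n x) N).mpr hs
      have hs2 : Summable (fun n : ℕ => (1/2:ℝ)^(n+N+1)) :=
        (summable_nat_add_iff (f := fun n => (1/2:ℝ)^(n+1)) N).mpr summable_half
      exact hs1.tsum_le_tsum (fun n => cterm_le hk (n+N) x) hs2
    linarith
  · rw [if_neg hall]
    simp only [hct]
    set S := {n : ℕ | ¬(digit k n x = 0 ∨ digit k n x = (k:ℤ) - 1)} with hS
    have hSne : S.Nonempty := not_forall.mp hall
    have hMS : sInf S ∈ S := Nat.sInf_mem hSne
    set M := sInf S with hMdef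
    have hNM : N ≤ M := by
      by_contra h
      exact hMS (hgood M (by omega))
    have hsplit : ∑ n ∈ Finset.range M, cterm k n x
        = ∑ n ∈ Finset.range N, cterm k n x + ∑ n ∈ Finset.Ico N M, cterm k n x := by
      rw [Finset.range_eq_Ico, Finset.range_eq_Ico]
      exact (Finset.sum_Ico_consecutive _ (Nat.zero_le N) hNM).symm
    have hIco : ∑ n ∈ Finset.Ico N M, cterm k n x ≤ (1/2:ℝ)^N - (1/2:ℝ)^M := by
      rw [← geom_Ico hNM]
      exact Finset.sum_le_sum (fun n _ => cterm_le hk n x)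
    have h2 : (1:ℝ)/2^(M+1) ≤ (1/2:ℝ)^M := by
      rw [one_div_pow_eq]
      exact pow_le_pow_of_le_one (by norm_num) (by norm_num) (by omega)
    linarith

lemma gk_ge (hk : 3 ≤ k) {x : ℝ} (hx1 : x ≠ 1) (N : ℕ)
    (hgood : ∀ n < N, digit k n x = 0 ∨ digit k n x = (k:ℤ) - 1) :
    (∑ n ∈ Finset.range N, cterm k n x) ≤ gk k x := by
  have hct : ∀ n, (digit k n x : ℝ) / (((k : ℝ) - 1) * 2 ^ (n + 1)) = cterm k n x :=
    fun n => rfl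
  rw [gk, if_neg hx1]
  by_cases hall : ∀ n, digit k n x = 0 ∨ digit k n x = (k:ℤ) - 1
  · rw [if_pos hall]
    simp only [hct]
    exact (summable_cterm hk x).sum_le_tsum (Finset.range N) (fun n _ => cterm_nonneg hk n x)
  · rw [if_neg hall]
    simp only [hct]
    set S := {n : ℕ | ¬(digit k n x = 0 ∨ digit k n x = (k:ℤ) - 1)} with hS
    have hSne : S.Nonempty := not_forall.mp hall
    have hMS : sInf S ∈ S := Nat.sInf_mem hSne
    set M := sInf S with hMdef
    have hNM : N ≤ M := by
      by_contra h
      exact hMS (hgood M (by omega))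
    have h1 : ∑ n ∈ Finset.range N, cterm k n x ≤ ∑ n ∈ Finset.range M, cterm k n x :=
      Finset.sum_le_sum_of_subset_of_nonneg (Finset.range_subset_range.mpr hNM)
        (fun n _ _ => cterm_nonneg hk n x)
    have h2 : (0:ℝ) ≤ 1/2^(M+1) := by positivity
    linarith

lemma gk_eq (hk : 3 ≤ k) {x : ℝ} (hx1 : x ≠ 1) (N : ℕ)
    (hgood : ∀ n < N, digit k n x = 0 ∨ digit k n x = (k:ℤ) - 1)
    (hbad : ¬(digit k N x = 0 ∨ digit k N x = (k:ℤ) - 1)) :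
    gk k x = (∑ n ∈ Finset.range N, cterm k n x) + (1/2:ℝ)^(N+1) := by
  have hct : ∀ n, (digit k n x : ℝ) / (((k : ℝ) - 1) * 2 ^ (n + 1)) = cterm k n x :=
    fun n => rfl
  rw [gk, if_neg hx1, if_neg (fun h => hbad (h N))]
  simp only [hct]
  have hSne : Set.Nonempty {n : ℕ | ¬(digit k n x = 0 ∨ digit k n x = (k:ℤ) - 1)} := ⟨N, hbad⟩
  have hM : sInf {n : ℕ | ¬(digit k n x = 0 ∨ digit k n x = (k:ℤ) - 1)} = N := by
    apply le_antisymm (Nat.sInf_le hbad)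
    by_contra h
    exact (Nat.sInf_mem hSne) (hgood _ (not_le.mp h))
  rw [hM, one_div_pow_eq]
end

section
variable {k : ℕ}

lemma digit_le_of_prefix (hk : 3 ≤ k) {x y : ℝ} (hx0 : 0 ≤ x) (hx1 : x < 1)
    (hy0 : 0 ≤ y) (hy1 : y < 1) (hxy : x ≤ y) (N : ℕ)
    (h : ∀ m < N, digit k m x = digit k m y) :
    digit k N x ≤ digit k N y := by
  have hFle : ⌊(k:ℝ)^(N+1)*x⌋ ≤ ⌊(k:ℝ)^(N+1)*y⌋ :=
    Int.floor_le_floor (mul_le_mul_of_nonneg_left hxy (by positivity))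
  cases N with
  | zero =>
    rw [floor_base hk hx0 hx1, floor_base hk hy0 hy1] at hFle
    exact hFle
  | succ m =>
    have hFm : ⌊(k:ℝ)^(m+1)*x⌋ = ⌊(k:ℝ)^(m+1)*y⌋ :=
      floor_eq_of_digits_eq hk hx0 hx1 hy0 hy1 m (fun j hj => h j (by omega))
    rw [floor_rec hk m x, floor_rec hk m y, hFm] at hFle
    omega
end

/-- `g_k` is monotone increasing on `[0,1]`. -/
theorem stmt6 (k : ℕ) (hk : 3 ≤ k) :
    MonotoneOn (gk k) (Set.Icc (0 : ℝ) 1) := by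
  intro x hx y hy hxy
  rcases eq_or_lt_of_le hxy with rfl | hlt
  · exact le_refl _
  have hx0 : 0 ≤ x := hx.1
  have hy1 : y ≤ 1 := hy.2
  have hx1 : x < 1 := lt_of_lt_of_le hlt hy1
  by_cases hy1' : y = 1
  · subst hy1'
    have h1 : gk k 1 = 1 := by rw [gk, if_pos rfl]
    have h2 := gk_le hk (ne_of_lt hx1) 0 (fun n hn => absurd hn (Nat.not_lt_zero n))
    rw [h1]
    simpa using h2
  have hy1'' : y < 1 := lt_of_le_of_ne hy1 hy1'
  have hy0 : 0 ≤ y := hy.1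
  have hne : x ≠ y := ne_of_lt hlt
  have hdiff : ∃ n, digit k n x ≠ digit k n y := by
    by_contra h
    push_neg at h
    exact hne (eq_of_digits_eq hk hx0 hx1 hy0 hy1'' h)
  classical
  set N := Nat.find hdiff with hNdef
  have hNd : digit k N x ≠ digit k N y := Nat.find_spec hdiff
  have hNlt : ∀ m < N, digit k m x = digit k m y :=
    fun m hm => not_ne_iff.mp (Nat.find_min hdiff hm)
  have hdlt : digit k N x < digit k N y :=
    lt_of_le_of_ne (digit_le_of_prefix hk hx0 hx1 hy0 hy1'' (le_of_lt hlt) N hNlt) hNd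
  have hsum : ∀ M, M ≤ N → ∑ n ∈ Finset.range M, cterm k n x = ∑ n ∈ Finset.range M, cterm k n y :=
    fun M hM => Finset.sum_congr rfl (fun n hn => by
      unfold cterm
      rw [hNlt n (lt_of_lt_of_le (Finset.mem_range.mp hn) hM)])
  by_cases hpre : ∀ m < N, digit k m x = 0 ∨ digit k m x = (k:ℤ) - 1
  · -- all digits below N good
    have hgy : ∀ m < N, digit k m y = 0 ∨ digit k m y = (k:ℤ) - 1 :=
      fun m hm => by rw [← hNlt m hm]; exact hpre m hm
    have hSeq := hsum N le_rfl
    by_cases hgxN : digit k N x = 0 ∨ digit k N x = (k:ℤ) - 1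
    · -- digit N x good, must be 0
      have hx0d : digit k N x = 0 := by
        rcases hgxN with h | h
        · exact h
        · exfalso
          have := digit_lt' hk N y
          omega
      have hgood' : ∀ n < N + 1, digit k n x = 0 ∨ digit k n x = (k:ℤ) - 1 := by
        intro n hn
        rcases Nat.lt_succ_iff_lt_or_eq.mp hn with h | h
        · exact hpre n h
        · subst h; exact hgxN
      have hub := gk_le hk (ne_of_lt hx1) (N+1) hgood'
      rw [Finset.sum_range_succ] at hub
      have hc0 : cterm k N x = 0 := by unfold cterm; rw [hx0d]; simp
      rw [hc0] at hub
      by_cases hgyN : digit k N y = 0 ∨ digit k N y = (k:ℤ) - 1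
      · have hyd : digit k N y = (k:ℤ) - 1 := by
          rcases hgyN with h | h
          · exfalso
            have := digit_nonneg hk N x
            omega
          · exact h
        have hgood'' : ∀ n < N + 1, digit k n y = 0 ∨ digit k n y = (k:ℤ) - 1 := by
          intro n hn
          rcases Nat.lt_succ_iff_lt_or_eq.mp hn with h | h
          · exact hgy n h
          · subst h; exact hgyN
        have hlb := gk_ge hk hy1' (N+1) hgood''
        rw [Finset.sum_range_succ] at hlb
        have hcy : cterm k N y = (1/2:ℝ)^(N+1) := by
          unfold cterm
          rw [hyd]
          push_cast
          rw [← one_div_pow_eq]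
          have hkk := (km1_pos hk).ne'
          field_simp
        rw [hcy] at hlb
        linarith
      · have hge := gk_eq hk hy1' N hgy hgyN
        linarith
    · -- digit N x bad
      have hgex := gk_eq hk (ne_of_lt hx1) N hpre hgxN
      by_cases hgyN : digit k N y = 0 ∨ digit k N y = (k:ℤ) - 1
      · have hyd : digit k N y = (k:ℤ) - 1 := by
          rcases hgyN with h | h
          · exfalso
            have := digit_nonneg hk N x
            omega
          · exact h
        have hgood'' : ∀ n < N + 1, digit k n y = 0 ∨ digit k n y = (k:ℤ) - 1 := by
          intro n hn
          rcases Nat.lt_succ_iff_lt_or_eq.mp hn with h | h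
          · exact hgy n h
          · subst h; exact hgyN
        have hlb := gk_ge hk hy1' (N+1) hgood''
        rw [Finset.sum_range_succ] at hlb
        have hcy : cterm k N y = (1/2:ℝ)^(N+1) := by
          unfold cterm
          rw [hyd]
          push_cast
          rw [← one_div_pow_eq]
          have hkk := (km1_pos hk).ne'
          field_simp
        rw [hcy] at hlb
        linarith
      · have hgey := gk_eq hk hy1' N hgy hgyN
        linarith
  · -- some bad digit of x below N
    have hSne : Set.Nonempty {n : ℕ | ¬(digit k n x = 0 ∨ digit k n x = (k:ℤ) - 1)} := by
      by_contra hemp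
      apply hpre
      intro m hm
      by_contra hbad
      exact hemp ⟨m, hbad⟩
    set M := sInf {n : ℕ | ¬(digit k n x = 0 ∨ digit k n x = (k:ℤ) - 1)} with hMdef
    have hMbad : ¬(digit k M x = 0 ∨ digit k M x = (k:ℤ) - 1) := Nat.sInf_mem hSne
    have hMN : M < N := by
      by_contra hMN
      apply hpre
      intro m hm
      by_contra hbad
      have : M ≤ m := Nat.sInf_le hbad
      omega
    have hMgood : ∀ n < M, digit k n x = 0 ∨ digit k n x = (k:ℤ) - 1 := by
      intro n hn
      by_contra hbad
      have : M ≤ n := Nat.sInf_le hbad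
      omega
    have hMbady : ¬(digit k M y = 0 ∨ digit k M y = (k:ℤ) - 1) := by
      rw [← hNlt M hMN]; exact hMbad
    have hMgoody : ∀ n < M, digit k n y = 0 ∨ digit k n y = (k:ℤ) - 1 := by
      intro n hn
      rw [← hNlt n (by omega)]
      exact hMgood n hn
    have hgex := gk_eq hk (ne_of_lt hx1) M hMgood hMbad
    have hgey := gk_eq hk hy1' M hMgoody hMbady
    rw [hgex, hgey, hsum M (le_of_lt hMN)]
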